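/- In the Euclidean plane ℝ², let 𝒞 be an open ball, let x, y ∈ 𝒞, and let A, B ∈ ℝ² \ 𝒞 be such that the closed segment [A,B] meets 𝒞. Suppose that x and y lie in two different connected components of 𝒞 \ [A,B]. Then for every closed ball ℬ whose boundary sphere contains both A and B, at least one of x and y belongs to ℬ. -/

import Mathlib

open scoped RealInnerProductSpace

lemma perp₂ (v : EuclideanSpace ℝ (Fin 2)) (hv : v ≠ 0) :
    ∃ n : EuclideanSpace ℝ (Fin 2), ⟪n, v⟫ = 0 ∧ n ≠ 0 ∧
      ∀ w : EuclideanSpace ℝ (Fin 2), ⟪n, w⟫ = 0 → ∃ t : ℝ, w = t • v := by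
  have hv' : v 0 ≠ 0 ∨ v 1 ≠ 0 := by
    by_contra h
    push_neg at h
    exact hv (PiLp.ext fun i => by fin_cases i <;> simp [h.1, h.2])
  refine ⟨(!₂[-v 1, v 0] : EuclideanSpace ℝ (Fin 2)), ?_, ?_, ?_⟩
  · simp [PiLp.inner_apply, Fin.sum_univ_two, RCLike.inner_apply]; ring
  · intro h
    rcases hv' with h0 | h1
    · have := congrArg (fun u => u 1) h; simp at this; exact h0 this
    · have := congrArg (fun u => u 0) h; simp at this; exact h1 this
  · intro w hw
    simp [PiLp.inner_apply, Fin.sum_univ_two, RCLike.inner_apply] at hw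
    rcases hv' with h0 | h1
    · refine ⟨w 0 / v 0, PiLp.ext fun i => ?_⟩
      fin_cases i
      · simp [PiLp.smul_apply]; field_simp
      · simp [PiLp.smul_apply]; field_simp; nlinarith [hw]
    · refine ⟨w 1 / v 1, PiLp.ext fun i => ?_⟩
      fin_cases i
      · simp [PiLp.smul_apply]; field_simp; nlinarith [hw]
      · simp [PiLp.smul_apply]; field_simp

lemma comb_pos {P Q a b : ℝ} (hP : 0 < P) (hQ : 0 < Q) (ha : 0 ≤ a) (hb : 0 ≤ b)
    (hab : a + b = 1) : 0 < a * P + b * Q := by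
  rcases ha.lt_or_eq with h | h
  · nlinarith [mul_pos h hP, mul_nonneg hb hQ.le]
  · have hb1 : b = 1 := by linarith
    rw [← h, hb1]; simpa using hQ

set_option maxHeartbeats 1000000 in
theorem stmt_17 (c : EuclideanSpace ℝ (Fin 2)) (ρ : ℝ)
    (x y A B : EuclideanSpace ℝ (Fin 2))
    (hA : A ∉ Metric.ball c ρ) (hB : B ∉ Metric.ball c ρ)
    (hmeet : (segment ℝ A B ∩ Metric.ball c ρ).Nonempty)
    (hx : x ∈ Metric.ball c ρ \ segment ℝ A B)
    (hy : y ∈ Metric.ball c ρ \ segment ℝ A B)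
    (hcomp : connectedComponentIn (Metric.ball c ρ \ segment ℝ A B) x ≠
             connectedComponentIn (Metric.ball c ρ \ segment ℝ A B) y)
    (c' : EuclideanSpace ℝ (Fin 2)) (ρ' : ℝ)
    (hA' : A ∈ Metric.sphere c' ρ') (hB' : B ∈ Metric.sphere c' ρ') :
    x ∈ Metric.closedBall c' ρ' ∨ y ∈ Metric.closedBall c' ρ' := by
  obtain ⟨p, hpAB, hpC⟩ := hmeet
  have hρ : 0 < ρ := lt_of_le_of_lt dist_nonneg (Metric.mem_ball.mp hpC)
  have hAB : A ≠ B := by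
    rintro rfl
    rw [segment_same] at hpAB
    exact hA (hpAB ▸ hpC)
  have hv : B - A ≠ 0 := sub_ne_zero.mpr (Ne.symm hAB)
  obtain ⟨n, hnv, hn0, hspan⟩ := perp₂ (B - A) hv
  set f : EuclideanSpace ℝ (Fin 2) → ℝ := fun z => ⟪n, z - A⟫ with hf
  -- f is affine along combinations with a + b = 1
  have faff : ∀ (u w : EuclideanSpace ℝ (Fin 2)) (a b : ℝ), a + b = 1 →
      f (a • u + b • w) = a * f u + b * f w := by
    intro u w a b hab
    simp only [hf]
    have h1 : a • u + b • w - A = a • (u - A) + b • (w - A) := by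
      have : a • (u - A) + b • (w - A) = a • u + b • w - (a + b) • A := by
        rw [smul_sub, smul_sub, add_smul]; abel
      rw [this, hab, one_smul]
    rw [h1, inner_add_right, real_inner_smul_right, real_inner_smul_right]
  -- f vanishes on the segment
  have fseg : ∀ z ∈ segment ℝ A B, f z = 0 := by
    intro z hz
    rw [segment_eq_image'] at hz
    obtain ⟨θ, hθ, rfl⟩ := hz
    simp only [hf]
    rw [add_sub_cancel_left, real_inner_smul_right, hnv, mul_zero]
  -- points of the ball where f vanishes lie on the segment
  have fline : ∀ z, f z = 0 → z ∈ Metric.ball c ρ → z ∈ segment ℝ A B := by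
    intro z hfz hzC
    obtain ⟨t, hzt⟩ := hspan (z - A) hfz
    have hz' : z = A + t • (B - A) := by rw [← hzt]; abel
    rw [segment_eq_image'] at hpAB
    obtain ⟨s, hs, hps⟩ := hpAB
    have hep : z - p = (t - s) • (B - A) := by
      rw [hz', ← hps, sub_smul]; beta_reduce; abel
    rcases le_or_gt t 1 with ht1 | ht1
    · rcases le_or_gt 0 t with ht0 | ht0
      · rw [segment_eq_image']
        exact ⟨t, ⟨ht0, ht1⟩, hz'.symm⟩
      · -- t < 0 : A ∈ [p, z] ⊆ ball, contradiction
        exfalso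
        apply hA
        have hst : 0 < s - t := by linarith [hs.1]
        have e2 : (s / (s - t)) • (z - p) = (-s) • (B - A) := by
          rw [hep, smul_smul]
          congr 1
          field_simp
          ring
        have hmem : A = p + (s / (s - t)) • (z - p) := by
          rw [e2, ← hps]; module
        have : A ∈ segment ℝ p z := by
          rw [segment_eq_image']
          refine ⟨s / (s - t), ⟨div_nonneg hs.1 hst.le, ?_⟩, hmem.symm⟩
          rw [div_le_one hst]
          linarith
        exact (convex_ball c ρ).segment_subset hpC hzC this
    · -- 1 < t : B ∈ [p, z] ⊆ ball, contradiction
      exfalso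
      apply hB
      have hst : 0 < t - s := by linarith [hs.2]
      have e2 : ((1 - s) / (t - s)) • (z - p) = (1 - s) • (B - A) := by
        rw [hep, smul_smul]
        congr 1
        field_simp
      have hmem : B = p + ((1 - s) / (t - s)) • (z - p) := by
        rw [e2, ← hps]; module
      have : B ∈ segment ℝ p z := by
        rw [segment_eq_image']
        refine ⟨(1 - s) / (t - s), ⟨div_nonneg (by linarith [hs.2]) hst.le, ?_⟩, hmem.symm⟩
        rw [div_le_one hst]
        linarith
      exact (convex_ball c ρ).segment_subset hpC hzC this
  have fx0 : f x ≠ 0 := fun h => hx.2 (fline x h hx.1)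
  have fy0 : f y ≠ 0 := fun h => hy.2 (fline y h hy.1)
  -- x and y are on opposite sides
  have hsign : f x * f y < 0 := by
    rcases lt_or_ge (f x * f y) 0 with h | h
    · exact h
    exfalso
    have hxy : 0 < f x * f y := lt_of_le_of_ne h (by
      intro h'
      rcases mul_eq_zero.mp h'.symm with h'' | h'' <;> [exact fx0 h''; exact fy0 h''])
    set S : Set (EuclideanSpace ℝ (Fin 2)) :=
      Metric.ball c ρ ∩ {z | 0 < f x * f z} with hS
    have hScon : Convex ℝ S := by
      refine (convex_ball c ρ).inter ?_
      intro u hu w hw a b ha hb hab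
      simp only [Set.mem_setOf_eq] at hu hw ⊢
      rw [faff u w a b hab]
      have he : f x * (a * f u + b * f w) = a * (f x * f u) + b * (f x * f w) := by ring
      rw [he]
      exact comb_pos hu hw ha hb hab
    have hSsub : S ⊆ Metric.ball c ρ \ segment ℝ A B := by
      rintro z ⟨hz1, hz2⟩
      refine ⟨hz1, fun hzseg => ?_⟩
      simp only [Set.mem_setOf_eq] at hz2
      rw [fseg z hzseg, mul_zero] at hz2
      exact lt_irrefl 0 hz2
    have hxS : x ∈ S := ⟨hx.1, by simpa using mul_self_pos.mpr fx0⟩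
    have hyS : y ∈ S := ⟨hy.1, hxy⟩
    have := hScon.isPreconnected.subset_connectedComponentIn hxS hSsub
    exact hcomp (connectedComponentIn_eq (this hyS))
  -- the affine function h
  set h : EuclideanSpace ℝ (Fin 2) → ℝ :=
    fun z => (‖z - c'‖ ^ 2 - ρ' ^ 2) - (‖z - c‖ ^ 2 - ρ ^ 2) with hh
  have hrep : ∀ z, h z = 2 * ⟪z, c - c'⟫ + (‖c'‖ ^ 2 - ‖c‖ ^ 2 - ρ' ^ 2 + ρ ^ 2) := by
    intro z
    simp only [hh]
    rw [norm_sub_sq_real, norm_sub_sq_real, inner_sub_right]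
    ring
  have haff : ∀ (u w : EuclideanSpace ℝ (Fin 2)) (a b : ℝ), a + b = 1 →
      h (a • u + b • w) = a * h u + b * h w := by
    intro u w a b hab
    rw [hrep, hrep, hrep, inner_add_left, real_inner_smul_left, real_inner_smul_left]
    ring_nf
    nlinarith [hab]
  have sphere_dist : ∀ z : EuclideanSpace ℝ (Fin 2), z ∈ Metric.sphere c' ρ' →
      ‖z - c'‖ = ρ' := fun z hz => by
    rw [← dist_eq_norm]; exact hz
  have hhA : h A ≤ 0 := by
    have h1 : ‖A - c'‖ = ρ' := sphere_dist A hA'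
    have h2 : ρ ≤ ‖A - c‖ := by
      rw [← dist_eq_norm]; exact not_lt.mp hA
    simp only [hh]
    rw [h1]
    nlinarith [pow_le_pow_left₀ hρ.le h2 2]
  have hhB : h B ≤ 0 := by
    have h1 : ‖B - c'‖ = ρ' := sphere_dist B hB'
    have h2 : ρ ≤ ‖B - c‖ := by
      rw [← dist_eq_norm]; exact not_lt.mp hB
    simp only [hh]
    rw [h1]
    nlinarith [pow_le_pow_left₀ hρ.le h2 2]
  have hhq : ∀ q, q ∈ Metric.sphere c' ρ' → q ∈ Metric.ball c ρ → 0 < h q := by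
    intro q h1 h2
    have h1' : ‖q - c'‖ = ρ' := sphere_dist q h1
    have h2' : ‖q - c‖ < ρ := by rw [← dist_eq_norm]; exact h2
    have h3 : 0 ≤ ‖q - c‖ := norm_nonneg _
    simp only [hh]
    rw [h1']
    nlinarith [pow_lt_pow_left₀ h2' h3 (two_ne_zero)]
  -- h is ≤ 0 on the segment [A,B]
  have hseg : ∀ z ∈ segment ℝ A B, h z ≤ 0 := by
    rintro z ⟨a, b, ha, hb, hab, rfl⟩
    rw [haff A B a b hab]
    nlinarith
  -- ρ' > 0
  have hρ' : 0 < ρ' := by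
    have h0 : 0 ≤ ρ' := by
      have := sphere_dist A hA'
      rw [← this]; exact norm_nonneg _
    rcases h0.lt_or_eq with h | h
    · exact h
    exfalso
    apply hAB
    have hA0 : A = c' := by
      have := sphere_dist A hA'; rw [← h] at this
      exact sub_eq_zero.mp (norm_eq_zero.mp this)
    have hB0 : B = c' := by
      have := sphere_dist B hB'; rw [← h] at this
      exact sub_eq_zero.mp (norm_eq_zero.mp this)
    rw [hA0, hB0]
  -- p is in the open ball around c'
  have hpA : p ≠ A := fun e => hA (e ▸ hpC)
  have hpB : p ≠ B := fun e => hB (e ▸ hpC)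
  have hpball' : p ∈ Metric.ball c' ρ' := by
    obtain ⟨a, b, ha, hb, hab, hp⟩ := hpAB
    have ha' : 0 < a := by
      rcases ha.lt_or_eq with h | h
      · exact h
      exfalso; apply hpB
      rw [← hp, ← h, zero_smul, zero_add]
      have : b = 1 := by linarith
      rw [this, one_smul]
    have hb' : 0 < b := by
      rcases hb.lt_or_eq with h | h
      · exact h
      exfalso; apply hpA
      rw [← hp, ← h, zero_smul, add_zero]
      have : a = 1 := by linarith
      rw [this, one_smul]
    have hAm : A ∈ Metric.closedBall c' ρ' :=
      Metric.sphere_subset_closedBall hA'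
    have hBm : B ∈ Metric.closedBall c' ρ' :=
      Metric.sphere_subset_closedBall hB'
    have := (strictConvex_closedBall ℝ c' ρ') hAm hBm hAB ha' hb' hab
    rw [interior_closedBall c' (ne_of_gt hρ')] at this
    exact hp ▸ this
  -- core lemma
  have core : ∀ z, z ∈ Metric.ball c ρ → f z ≠ 0 →
      (∀ q, q ∈ Metric.sphere c' ρ' → q ∈ Metric.ball c ρ → ¬ (0 < f q * f z)) →
      z ∈ Metric.closedBall c' ρ' := by
    intro z hzC hfz hnoq
    by_contra hzout
    have hzout' : ρ' < dist z c' := not_le.mp (fun h' => hzout h')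
    -- choose a perturbed point p'
    obtain ⟨r, hr, hrsub⟩ := Metric.isOpen_iff.mp (Metric.isOpen_ball.inter Metric.isOpen_ball)
      p ⟨hpC, hpball'⟩
    set ε : ℝ := r / (2 * (‖f z • n‖ + 1)) with hε
    have hεpos : 0 < ε := by positivity
    set p' : EuclideanSpace ℝ (Fin 2) := p + ε • f z • n with hp'
    have hp'mem : p' ∈ Metric.ball c ρ ∩ Metric.ball c' ρ' := by
      apply hrsub
      rw [Metric.mem_ball, dist_eq_norm, hp', add_sub_cancel_left, norm_smul,
        Real.norm_eq_abs, abs_of_pos hεpos, hε]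
      rw [div_mul_eq_mul_div, div_lt_iff₀ (by positivity)]
      nlinarith [norm_nonneg (f z • n), hr]
    have hfp' : f p' = ε * (f z * ‖n‖ ^ 2) := by
      simp only [hf, hp']
      have : p + ε • f z • n - A = (p - A) + ε • f z • n := by abel
      rw [this, inner_add_right, real_inner_smul_right, real_inner_smul_right,
        real_inner_self_eq_norm_sq]
      have : ⟪n, p - A⟫ = 0 := fseg p hpAB
      rw [this]; ring
    have hn' : 0 < ‖n‖ := norm_pos_iff.mpr hn0
    have hfp'z : 0 < f p' * f z := by
      have he : f p' * f z = ε * ‖n‖ ^ 2 * (f z * f z) := by rw [hfp']; ring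
      rw [he]
      exact mul_pos (mul_pos hεpos (pow_pos hn' 2)) (mul_self_pos.mpr hfz)
    -- IVT along the segment from p' to z
    set g : ℝ → ℝ := fun t => dist (p' + t • (z - p')) c' with hg
    have hgc : Continuous g := by
      apply Continuous.dist _ continuous_const
      exact continuous_const.add (continuous_id.smul continuous_const)
    have hg0 : g 0 < ρ' := by
      simp only [hg, zero_smul, add_zero]
      exact hp'mem.2
    have hg1 : ρ' < g 1 := by
      simp only [hg, one_smul]
      have : p' + (z - p') = z := by abel
      rw [this]
      exact hzout'
    have := intermediate_value_Icc (by norm_num : (0:ℝ) ≤ 1) hgc.continuousOn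
    obtain ⟨t, ht, hgt⟩ := this ⟨hg0.le, hg1.le⟩
    set q : EuclideanSpace ℝ (Fin 2) := p' + t • (z - p') with hq
    have hqconv : q = (1 - t) • p' + t • z := by
      rw [hq, smul_sub, sub_smul, one_smul]; abel
    have hqsphere : q ∈ Metric.sphere c' ρ' := hgt
    have hqball : q ∈ Metric.ball c ρ := by
      rw [hqconv]
      exact (convex_ball c ρ) hp'mem.1 hzC (by linarith [ht.1, ht.2]) ht.1 (by ring)
    apply hnoq q hqsphere hqball
    have hfq : f q = (1 - t) * f p' + t * f z := by
      rw [hqconv, faff p' z (1 - t) t (by ring)]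
    rw [hfq]
    have h1t : 0 ≤ 1 - t := by linarith [ht.2]
    have he : ((1 - t) * f p' + t * f z) * f z
        = (1 - t) * (f p' * f z) + t * (f z * f z) := by ring
    rw [he]
    exact comb_pos hfp'z (mul_self_pos.mpr hfz) h1t ht.1 (by ring)
  by_cases hcase : ∃ q, q ∈ Metric.sphere c' ρ' ∧ q ∈ Metric.ball c ρ ∧ 0 < f q * f x
  · right
    obtain ⟨q, hq1, hq2, hq3⟩ := hcase
    refine core y hy.1 fy0 ?_
    intro q' hq1' hq2' hq3'
    -- q and q' are on opposite sides; the segment [q,q'] crosses the line inside the ball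
    have hqq' : f q * f q' < 0 := by nlinarith [mul_pos hq3 hq3']
    have hd : f q - f q' ≠ 0 := by
      intro h'
      rw [sub_eq_zero.mp h'] at hqq'
      nlinarith
    set t₀ : ℝ := f q / (f q - f q') with ht₀
    have ht₀mem : 0 ≤ t₀ ∧ t₀ ≤ 1 := by
      rcases mul_neg_iff.mp hqq' with ⟨h1, h2⟩ | ⟨h1, h2⟩
      · constructor
        · exact div_nonneg h1.le (by linarith)
        · rw [div_le_one (by linarith)]; linarith
      · constructor
        · rw [div_nonneg_iff]; right; exact ⟨h1.le, by linarith⟩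
        · rw [div_le_one_iff]; right; right; exact ⟨by linarith, by linarith⟩
    set w : EuclideanSpace ℝ (Fin 2) := (1 - t₀) • q + t₀ • q' with hw
    have hfw : f w = 0 := by
      rw [hw, faff q q' (1 - t₀) t₀ (by ring), ht₀]
      field_simp
      ring
    have hwball : w ∈ Metric.ball c ρ :=
      (convex_ball c ρ) hq2 hq2' (by linarith [ht₀mem.1, ht₀mem.2]) ht₀mem.1 (by ring)
    have hwseg : w ∈ segment ℝ A B := fline w hfw hwball
    have hw1 : h w ≤ 0 := hseg w hwseg
    have hw2 : 0 < h w := by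
      rw [hw, haff q q' (1 - t₀) t₀ (by ring)]
      exact comb_pos (hhq q hq1 hq2) (hhq q' hq1' hq2')
        (by linarith [ht₀mem.2]) ht₀mem.1 (by ring)
    linarith
  · left
    push_neg at hcase
    exact core x hx.1 fx0 fun q h1 h2 h3 => not_lt.mpr (hcase q h1 h2) h3
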